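/- arXiv:1012.2538 — 11 statements merged into one kernel-verified Lean document; each statement's English description precedes it below -/
import Mathlib

section
/- A commutative ring R is a PF-ring (every principal ideal is flat) if and only if for all elements s, x in R with s*x = 0, there exists α in the annihilator of s such that x = α*x. -/
/-- A commutative ring is a PF-ring if every principal ideal is flat. -/
def IsPFRing (R : Type*) [CommRing R] : Prop :=
  ∀ a : R, Module.Flat R (Ideal.span {a})

theorem pf_iff_annihilator_condition (R : Type*) [CommRing R] :
    IsPFRing R ↔ ∀ s x : R, s * x = 0 → ∃ α : R, α * s = 0 ∧ x = α * x := by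
  constructor
  · intro hPF s x hsx
    haveI := hPF s
    set M := Ideal.span ({s} : Set R)
    have hmem : s ∈ M := Ideal.subset_span rfl
    set g : M := ⟨s, hmem⟩ with hg
    have hrel : ∑ _i : PUnit.{1}, x • g = 0 := by
      apply Subtype.ext
      simp [hg, mul_comm x s, hsx]
    obtain ⟨κ, a, y, hy, ha⟩ :=
      Module.Flat.isTrivialRelation_of_sum_smul_eq_zero (f := fun _ : PUnit.{1} => x) hrel
    -- y j ∈ span {s}, so y j = s * c j
    have hc : ∀ j, ∃ c : R, (y j : R) = s * c := by
      intro j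
      obtain ⟨d, hd⟩ := Ideal.mem_span_singleton'.mp (y j).2
      exact ⟨d, by rw [← hd]; ring⟩
    choose c hc using hc
    set β : R := ∑ j, a PUnit.unit j * c j with hβ
    have hsβ : s = β * s := by
      have := congrArg Subtype.val (hy PUnit.unit)
      simp only [hg, Submodule.coe_sum, SetLike.val_smul, smul_eq_mul] at this
      calc s = ∑ j, a PUnit.unit j * (y j : R) := this
        _ = β * s := by rw [hβ, Finset.sum_mul]; apply Finset.sum_congr rfl
                        intro j _; rw [hc j]; ring
    have hxβ : x * β = 0 := by
      have h0 : ∀ j, x * a PUnit.unit j = 0 := by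
        intro j
        have := ha j
        simpa using this
      rw [hβ, Finset.mul_sum]
      apply Finset.sum_eq_zero
      intro j _
      rw [← mul_assoc, h0 j, zero_mul]
    refine ⟨1 - β, ?_, ?_⟩
    · rw [sub_mul, one_mul, ← hsβ, sub_self]
    · rw [sub_mul, one_mul, mul_comm β x, hxβ, sub_zero]
  · intro h s
    apply Module.Flat.of_forall_isTrivialRelation
    intro ι f m hrel
    have hmem : s ∈ Ideal.span ({s} : Set R) := Ideal.subset_span rfl
    have hc : ∀ i, ∃ c : R, (m i : R) = c * s := by
      intro i
      obtain ⟨d, hd⟩ := Ideal.mem_span_singleton'.mp (m i).2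
      exact ⟨d, hd.symm⟩
    choose c hc using hc
    set x : R := ∑ i, f i * c i with hx
    have hsx : s * x = 0 := by
      have := congrArg Subtype.val hrel
      simp only [Submodule.coe_sum, SetLike.val_smul, smul_eq_mul, Submodule.coe_zero] at this
      rw [hx, Finset.mul_sum]
      calc ∑ i, s * (f i * c i) = ∑ i, f i * (m i : R) := by
            apply Finset.sum_congr rfl; intro i _; rw [hc i]; ring
        _ = 0 := this
    obtain ⟨α, hαs, hαx⟩ := h s x hsx
    refine ⟨1, fun i _ => c i - α * c i, fun _ => ⟨s, hmem⟩, ?_, ?_⟩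
    · intro i
      apply Subtype.ext
      simp only [Finset.sum_const, Finset.card_univ, Fintype.card_fin, one_smul,
        SetLike.val_smul, smul_eq_mul]
      rw [hc i, sub_mul, mul_assoc, mul_comm (c i) s, ← mul_assoc, hαs, zero_mul, sub_zero]
    · intro j
      have : ∑ i, f i * (c i - α * c i) = x - α * x := by
        rw [hx, Finset.mul_sum, ← Finset.sum_sub_distrib]
        apply Finset.sum_congr rfl; intro i _; ring
      rw [this, ← hαx, sub_self]
end

section
/- In a commutative ring R, every ideal is P-flat if and only if every principal ideal is P-flat. -/
/-- An `R`-module `M` is P-flat if whenever `s • x = 0`, `x ∈ (0 : s) M`. -/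
def IsPFlat (R : Type*) [CommRing R] (M : Type*) [AddCommGroup M] [Module R M] : Prop :=
  ∀ (s : R) (x : M), s • x = 0 → x ∈ (Ideal.span {s}).annihilator • (⊤ : Submodule R M)

theorem every_ideal_pflat_iff_every_principal_ideal_pflat (R : Type*) [CommRing R] :
    (∀ I : Ideal R, IsPFlat R I) ↔ (∀ a : R, IsPFlat R (Ideal.span {a})) := by
  constructor
  · intro h a
    exact h (Ideal.span {a})
  · intro h I s x hsx
    have hx : (x : R) ∈ I := x.2
    have hle : Ideal.span {(x : R)} ≤ I := by
      rw [Ideal.span_le]; simpa using hx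
    set y : Ideal.span {(x : R)} := ⟨(x : R), Ideal.subset_span rfl⟩ with hy
    have hsy : s • y = 0 := by
      apply Subtype.ext
      have := congrArg (Subtype.val) hsx
      simpa using this
    have hmem := h (x : R) s y hsy
    let f : Ideal.span {(x : R)} →ₗ[R] I := Submodule.inclusion hle
    have : f y ∈ (Ideal.span {s}).annihilator • (⊤ : Submodule R I) := by
      have h1 : f y ∈ Submodule.map f ((Ideal.span {s}).annihilator • ⊤) :=
        Submodule.mem_map_of_mem hmem
      rw [Submodule.map_smul''] at h1
      exact Submodule.smul_mono le_rfl le_top h1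
    have hfy : f y = x := Subtype.ext rfl
    rwa [hfy] at this
end

section
/- If every principal ideal of a commutative ring R is P-flat, then every principal ideal of R is flat. -/
theorem principal_pflat_imp_principal_flat (R : Type*) [CommRing R]
    (h : ∀ a : R, IsPFlat R (Ideal.span {a})) :
    ∀ a : R, Module.Flat R (Ideal.span {a}) := by
  intro a
  apply Module.Flat.of_forall_isTrivialRelation
  intro ι f x hfx
  -- write each `x i` as `c i * a`
  have hc : ∀ i, ∃ c : R, (x i : R) = c * a := fun i =>
    (Ideal.mem_span_singleton'.mp (x i).2).imp fun c h => h.symm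
  choose c hc using hc
  set s : R := ∑ i, f i * c i with hs
  have ha : a ∈ Ideal.span ({a} : Set R) := Ideal.mem_span_singleton_self a
  have hsa : s * a = 0 := by
    have := congrArg (Subtype.val) hfx
    simpa [hs, Finset.sum_mul, mul_assoc, hc, Submodule.coe_sum] using this
  -- P-flatness gives membership in annihilator smul top
  have hmem : (⟨a, ha⟩ : Ideal.span ({a} : Set R)) ∈
      (Ideal.span {s}).annihilator • (⊤ : Submodule R (Ideal.span ({a} : Set R))) := by
    apply h a s ⟨a, ha⟩
    exact Subtype.ext (by simpa using hsa)
  -- extract `u` with `u * s = 0` and `u * a = a`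
  have key : ∃ u : R, u * s = 0 ∧ u * a = a := by
    have : ∀ z : Ideal.span ({a} : Set R),
        z ∈ (Ideal.span {s}).annihilator • (⊤ : Submodule R (Ideal.span ({a} : Set R))) →
        ∃ u : R, u * s = 0 ∧ u * a = (z : R) := by
      intro z hz
      refine Submodule.smul_induction_on hz ?_ ?_
      · intro r hr n _
        obtain ⟨d, hd⟩ := Ideal.mem_span_singleton'.mp n.2
        refine ⟨r * d, ?_, ?_⟩
        · have hrs : r • s = 0 := by
            have := (Submodule.mem_annihilator.mp hr) s (Ideal.mem_span_singleton_self s)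
            simpa using this
          have : r * s = 0 := by simpa [smul_eq_mul] using hrs
          rw [mul_comm r d, mul_assoc, this, mul_zero]
        · rw [mul_assoc, hd]
          rfl
      · rintro y z ⟨u, hu1, hu2⟩ ⟨v, hv1, hv2⟩
        exact ⟨u + v, by rw [add_mul, hu1, hv1, add_zero],
          by rw [add_mul, hu2, hv2]; rfl⟩
    obtain ⟨u, hu1, hu2⟩ := this _ hmem
    exact ⟨u, hu1, hu2⟩
  obtain ⟨u, hus, hua⟩ := key
  -- the trivializing data
  refine ⟨1, fun i _ => c i * u, fun _ => ⟨a, ha⟩, ?_, ?_⟩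
  · intro i
    apply Subtype.ext
    simp only [Finset.univ_unique, Finset.sum_singleton]
    show (x i : R) = (c i * u) * a
    rw [mul_assoc, hua, hc]
  · intro j
    have : (∑ i, f i * (c i * u)) = s * u := by
      rw [hs, Finset.sum_mul]
      exact Finset.sum_congr rfl fun i _ => by ring
    rw [this, mul_comm, hus]
end

section
/- If R is a PF-ring (every principal ideal is flat), then for every multiplicative subset S of R, the localization S⁻¹R is also a PF-ring. -/
theorem localization_isPFRing (R : Type*) [CommRing R] (S : Submonoid R)
    (h : IsPFRing R) : IsPFRing (Localization S) := by
  intro a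
  obtain ⟨⟨r, s⟩, rfl⟩ := IsLocalization.mk'_surjective S a
  have hu : IsUnit (IsLocalization.mk' (Localization S) (1 : R) s) := by
    refine IsUnit.of_mul_eq_one (algebraMap R (Localization S) s) ?_
    rw [IsLocalization.mk'_spec, map_one]
  have hspan : Ideal.span {IsLocalization.mk' (Localization S) r s}
      = (Ideal.span {r}).map (algebraMap R (Localization S)) := by
    rw [IsLocalization.mk'_eq_mul_mk'_one, Ideal.span_singleton_mul_right_unit hu,
      Ideal.map_span, Set.image_singleton]
  rw [hspan, ← Ideal.localized'_eq_map (Localization S) S]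
  have := h r
  exact Module.Flat.of_isLocalizedModule (Localization S) S
    ((Ideal.span {r}).toLocalized' (Localization S) S (Algebra.linearMap R (Localization S)))
end

section
/- A product ring R₁ × R₂ of commutative rings is a PF-ring if and only if both R₁ and R₂ are PF-rings. -/
universe u

/-- Key characterization: the principal ideal `span {x}` is flat iff for every `s` with
`s * x = 0` there is `α` with `α * s = 0` and `α * x = x`. -/
lemma flat_span_singleton_iff {R : Type u} [CommRing R] (x : R) :
    Module.Flat R (Ideal.span {x}) ↔ ∀ s : R, s * x = 0 → ∃ α : R, α * s = 0 ∧ α * x = x := by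
  constructor
  · intro hflat s hs
    have hmem : x ∈ Ideal.span ({x} : Set R) := Ideal.mem_span_singleton_self x
    set g : Ideal.span ({x} : Set R) := ⟨x, hmem⟩ with hg
    have hrel : ∑ _i : PUnit.{u+1}, s • g = 0 := by
      ext
      simp [g, hs]
    obtain ⟨κ, a, y, hxy, ha⟩ :=
      Module.Flat.isTrivialRelation_of_sum_smul_eq_zero
        (f := fun _ : PUnit.{u+1} => s) (x := fun _ => g) hrel
    -- each y j = c j * x
    have hy : ∀ j : Fin κ, ∃ c : R, c * x = (y j : R) := fun j =>
      Ideal.mem_span_singleton'.mp (y j).2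
    choose c hc using hy
    refine ⟨∑ j : Fin κ, a PUnit.unit j * c j, ?_, ?_⟩
    · have := ha
      calc (∑ j : Fin κ, a PUnit.unit j * c j) * s
          = ∑ j : Fin κ, c j * (∑ _i : PUnit.{u+1}, s * a _i j) := by
            rw [Finset.sum_mul]
            refine Finset.sum_congr rfl fun j _ => ?_
            simp [Finset.sum_const]
            ring
        _ = 0 := by
            simp only [ha]
            simp
    · have hx : x = ∑ j : Fin κ, a PUnit.unit j * (y j : R) := by
        have := congrArg (Subtype.val) (hxy PUnit.unit)
        simpa [g] using this
      calc (∑ j : Fin κ, a PUnit.unit j * c j) * x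
          = ∑ j : Fin κ, a PUnit.unit j * (c j * x) := by
            rw [Finset.sum_mul]; exact Finset.sum_congr rfl fun j _ => mul_assoc _ _ _
        _ = ∑ j : Fin κ, a PUnit.unit j * (y j : R) := by simp_rw [hc]
        _ = x := hx.symm
  · intro h
    apply Module.Flat.of_forall_isTrivialRelation
    intro ι f m hfm
    have hmem : x ∈ Ideal.span ({x} : Set R) := Ideal.mem_span_singleton_self x
    set g : Ideal.span ({x} : Set R) := ⟨x, hmem⟩ with hg
    have hm : ∀ i : Fin ι, ∃ c : R, c * x = (m i : R) := fun i =>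
      Ideal.mem_span_singleton'.mp (m i).2
    choose c hc using hm
    have hsx : (∑ i : Fin ι, f i * c i) * x = 0 := by
      have := congrArg (Subtype.val) hfm
      simp only [Submodule.coe_sum, SetLike.val_smul, smul_eq_mul] at this
      rw [Finset.sum_mul]
      calc ∑ i : Fin ι, f i * c i * x = ∑ i : Fin ι, f i * (m i : R) := by
            refine Finset.sum_congr rfl fun i _ => ?_
            rw [mul_assoc, hc]
        _ = 0 := by simpa using this
    obtain ⟨α, hαs, hαx⟩ := h _ hsx
    refine ⟨1, fun i _ => c i * α, fun _ => g, fun i => ?_, fun j => ?_⟩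
    · ext
      simp only [Finset.sum_const, Finset.card_univ, Fintype.card_fin, one_smul,
        SetLike.val_smul, smul_eq_mul, g]
      rw [mul_assoc, hαx, hc]
    · calc ∑ i : Fin ι, f i * (c i * α) = α * ∑ i : Fin ι, f i * c i := by
            rw [Finset.mul_sum]; exact Finset.sum_congr rfl fun i _ => by ring
        _ = 0 := hαs

theorem prod_isPFRing_iff (R₁ R₂ : Type*) [CommRing R₁] [CommRing R₂] :
    IsPFRing (R₁ × R₂) ↔ IsPFRing R₁ ∧ IsPFRing R₂ := by
  simp only [IsPFRing]
  constructor
  · intro h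
    constructor
    · intro x
      rw [flat_span_singleton_iff]
      intro s hs
      have := (flat_span_singleton_iff ((x, 0) : R₁ × R₂)).mp (h (x, 0)) (s, 0)
        (by simp [Prod.ext_iff, hs])
      obtain ⟨α, hα1, hα2⟩ := this
      exact ⟨α.1, by simpa using congrArg Prod.fst hα1, by simpa using congrArg Prod.fst hα2⟩
    · intro x
      rw [flat_span_singleton_iff]
      intro s hs
      have := (flat_span_singleton_iff ((0, x) : R₁ × R₂)).mp (h (0, x)) (0, s)
        (by simp [Prod.ext_iff, hs])
      obtain ⟨α, hα1, hα2⟩ := this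
      exact ⟨α.2, by simpa using congrArg Prod.snd hα1, by simpa using congrArg Prod.snd hα2⟩
  · rintro ⟨h₁, h₂⟩ x
    rw [flat_span_singleton_iff]
    rintro ⟨s₁, s₂⟩ hs
    obtain ⟨hs1, hs2⟩ := Prod.ext_iff.mp hs
    obtain ⟨α₁, hα₁s, hα₁x⟩ := (flat_span_singleton_iff x.1).mp (h₁ x.1) s₁ hs1
    obtain ⟨α₂, hα₂s, hα₂x⟩ := (flat_span_singleton_iff x.2).mp (h₂ x.2) s₂ hs2
    exact ⟨(α₁, α₂), Prod.ext hα₁s hα₂s, Prod.ext hα₁x hα₂x⟩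
end

section
/- Let R be a Dedekind domain and I = P₁^{a₁}···Pₙ^{aₙ} a nonzero proper ideal with P₁,…,Pₙ distinct nonzero prime ideals and aᵢ ≥ 1. Then R/I is a PF-ring if and only if aᵢ = 1 for all i. -/
open TensorProduct

/-- A ring in which every principal ideal is flat is reduced. -/
lemma isReduced_of_principal_flat {S : Type*} [CommRing S]
    (h : ∀ a : S, Module.Flat S (Ideal.span {a})) : IsReduced S := by
  rw [isReduced_iff_pow_one_lt 2 one_lt_two]
  intro x hx
  have hxx : x * x = 0 := by rw [← sq]; exact hx
  set J : Ideal S := Ideal.torsionOf S S x with hJdef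
  have hxJ : x ∈ J := by
    rw [hJdef, Ideal.mem_torsionOf_iff, smul_eq_mul]; exact hxx
  haveI hflat : Module.Flat S (Submodule.span S {x} : Submodule S S) := h x
  haveI : Module.Flat S (S ⧸ J) :=
    Module.Flat.of_linearEquiv (Ideal.quotTorsionOfEquivSpanSingleton S S x)
  set K : Ideal S := Ideal.span {x} with hKdef
  have hxK : x ∈ K := Ideal.subset_span rfl
  have inj := (Module.Flat.iff_rTensor_injective' (R := S) (M := S ⧸ J)).mp inferInstance K
  set t : K ⊗[S] (S ⧸ J) := (⟨x, hxK⟩ : K) ⊗ₜ (Ideal.Quotient.mk J 1) with ht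
  have h0 : (LinearMap.rTensor (S ⧸ J) K.subtype) t = 0 := by
    rw [ht, LinearMap.rTensor_tmul]
    have h1 : (K.subtype ⟨x, hxK⟩ : S) = x := rfl
    rw [h1]
    have : (x : S) ⊗ₜ[S] (Ideal.Quotient.mk J 1) =
        (1 : S) ⊗ₜ[S] (x • (Ideal.Quotient.mk J 1)) := by
      rw [← smul_tmul, smul_eq_mul, mul_one]
    rw [this]
    have hmk : x • (Ideal.Quotient.mk J 1) = 0 := by
      have : x • (Ideal.Quotient.mk J 1) = Ideal.Quotient.mk J (x * 1) := rfl
      rw [this, mul_one, Ideal.Quotient.eq_zero_iff_mem]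
      exact hxJ
    rw [hmk, tmul_zero]
  have ht0 : t = 0 := inj (by rw [h0, map_zero])
  have happ : tensorQuotEquivQuotSMul (↥K) J t = 0 := by
    rw [ht0, LinearEquiv.map_zero]
  rw [ht] at happ
  have heq : tensorQuotEquivQuotSMul (↥K) J ((⟨x, hxK⟩ : K) ⊗ₜ (Ideal.Quotient.mk J 1)) =
      Submodule.Quotient.mk ((1 : S) • (⟨x, hxK⟩ : K)) :=
    tensorQuotEquivQuotSMul_tmul_mk J (⟨x, hxK⟩ : K) 1
  rw [heq, one_smul] at happ
  have hmem : (⟨x, hxK⟩ : K) ∈ J • (⊤ : Submodule S K) :=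
    (Submodule.Quotient.mk_eq_zero _).mp happ
  have hbot : J • (⊤ : Submodule S K) = ⊥ := by
    rw [eq_bot_iff]
    refine Submodule.smul_le.mpr ?_
    intro j hj k _
    obtain ⟨c, hc⟩ := Ideal.mem_span_singleton'.mp k.2
    have hjx : j * x = 0 := by
      rw [hJdef, Ideal.mem_torsionOf_iff, smul_eq_mul] at hj; exact hj
    have : j • k = 0 := by
      apply Subtype.ext
      show j • (k : S) = 0
      rw [smul_eq_mul, ← hc, mul_left_comm, hjx, mul_zero]
    rw [this]
    exact Submodule.zero_mem ⊥
  rw [hbot, Submodule.mem_bot] at hmem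
  exact congrArg Subtype.val hmem

theorem dedekind_quotient_isPFRing_iff (R : Type*) [CommRing R] [IsDomain R]
    [IsDedekindDomain R] (n : ℕ) (P : Fin n → Ideal R) (hP : ∀ i, (P i).IsPrime)
    (hP0 : ∀ i, P i ≠ ⊥) (hPinj : Function.Injective P) (a : Fin n → ℕ)
    (ha : ∀ i, 1 ≤ a i) (I : Ideal R) (hI : I = ∏ i, P i ^ a i)
    (hIbot : I ≠ ⊥) (hItop : I ≠ ⊤) :
    IsPFRing (R ⧸ I) ↔ ∀ i, a i = 1 := by
  constructor
  · intro hpf i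
    haveI : IsReduced (R ⧸ I) := isReduced_of_principal_flat hpf
    have hrad : I.IsRadical := (Ideal.isRadical_iff_quotient_reduced I).mpr this
    by_contra hne
    have h2 : 2 ≤ a i := by have := ha i; omega
    -- ∏ P j ≤ I
    have hprodle : (∏ j, P j) ≤ I := by
      set N : ℕ := Finset.univ.sup a with hN
      have hNa : ∀ j, a j ≤ N := fun j => Finset.le_sup (Finset.mem_univ j)
      have hN0 : N ≠ 0 := by
        have := hNa i; omega
      have hpow : (∏ j, P j) ^ N ≤ I := by
        rw [← Finset.prod_pow, hI]
        refine Ideal.le_of_dvd (Finset.prod_dvd_prod_of_dvd _ _ fun j _ => ?_)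
        exact pow_dvd_pow (P j) (hNa j)
      calc (∏ j, P j) ≤ Ideal.radical ((∏ j, P j) ^ N) := by
              rw [Ideal.radical_pow _ hN0]; exact Ideal.le_radical
        _ ≤ Ideal.radical I := Ideal.radical_mono hpow
        _ = I := hrad.radical
    have hle2 : I ≤ P i ^ 2 := by
      calc I = ∏ j, P j ^ a j := hI
        _ ≤ P i ^ a i := Ideal.prod_le_inf.trans (Finset.inf_le (Finset.mem_univ i))
        _ ≤ P i ^ 2 := Ideal.pow_le_pow_right h2
    have hdvd : P i ^ 2 ∣ ∏ j, P j := Ideal.dvd_iff_le.mpr (hprodle.trans hle2)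
    rw [← Finset.mul_prod_erase Finset.univ P (Finset.mem_univ i), sq] at hdvd
    have hPi0 : P i ≠ 0 := hP0 i
    have hdvd2 : P i ∣ ∏ j ∈ Finset.univ.erase i, P j :=
      (mul_dvd_mul_iff_left hPi0).mp hdvd
    have hprime : Prime (P i) := (Ideal.prime_iff_isPrime hPi0).mpr (hP i)
    obtain ⟨j, hj, hdj⟩ := hprime.exists_mem_finset_dvd hdvd2
    have hle : P j ≤ P i := Ideal.le_of_dvd hdj
    haveI := hP j
    haveI := hP i
    have : P j = P i := (Ring.DimensionLeOne.prime_le_prime_iff_eq (hP0 j)).mp hle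
    exact Finset.ne_of_mem_erase hj (hPinj this)
  · intro h1
    have e := IsDedekindDomain.quotientEquivPiOfProdEq (R := R) I P (fun _ => 1)
      (fun i => (Ideal.prime_iff_isPrime (hP0 i)).mpr (hP i))
      (fun i j hij hEq => hij (hPinj hEq))
      (by
        rw [hI]
        exact Finset.prod_congr rfl fun i _ => by rw [h1 i])
    haveI : ∀ i, IsSemisimpleRing (R ⧸ P i ^ 1) := by
      intro i
      haveI : (P i ^ 1).IsMaximal := by
        rw [pow_one]; exact (hP i).isMaximal (hP0 i)
      letI := Ideal.Quotient.field (P i ^ 1)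
      exact IsArtinianRing.isSemisimpleRing_of_isReduced (R ⧸ P i ^ 1)
    haveI : IsSemisimpleRing (R ⧸ I) := e.symm.isSemisimpleRing
    intro x
    obtain ⟨Q, hQ⟩ := exists_isCompl (Ideal.span {x} : Submodule (R ⧸ I) (R ⧸ I))
    exact Module.Flat.of_retract (Submodule.subtype _)
      (Submodule.linearProjOfIsCompl _ _ hQ)
      (by ext y; exact congrArg Subtype.val (Submodule.linearProjOfIsCompl_apply_left hQ y))
end

section
/- Let φ : R → S be a ring homomorphism admitting a retraction ψ : S → R (i.e., ψ ∘ φ = id_R). If S is a PF-ring, then R is a PF-ring. -/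
universe u

theorem span_singleton_flat_iff {R : Type u} [CommRing R] (a : R) :
    Module.Flat R (Ideal.span {a}) ↔
      ∀ s : R, s * a = 0 → ∃ t : R, t * a = a ∧ s * t = 0 := by
  constructor
  · intro hflat s hs
    have hmem : a ∈ Ideal.span {a} := Ideal.mem_span_singleton_self a
    have hrel : ∑ _i : PUnit.{u + 1}, (fun _ => s) _i •
        (fun _ => (⟨a, hmem⟩ : Ideal.span {a})) _i = 0 := by
      simp only [Finset.univ_unique, Finset.sum_singleton]
      ext
      simpa using hs
    obtain ⟨κ, c, y, hx, hc⟩ :=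
      Module.Flat.isTrivialRelation_of_sum_smul_eq_zero hrel
    -- each y j is a multiple of a
    choose d hd using fun j => Ideal.mem_span_singleton'.mp (y j).2
    refine ⟨∑ j, c PUnit.unit j * d j, ?_, ?_⟩
    · have := congrArg (Subtype.val) (hx PUnit.unit)
      simp only [Submodule.coe_sum, SetLike.val_smul, smul_eq_mul] at this
      rw [Finset.sum_mul]
      calc ∑ j, c PUnit.unit j * d j * a = ∑ j, c PUnit.unit j * ↑(y j) :=
            Finset.sum_congr rfl fun j _ => by rw [mul_assoc, hd j]
        _ = a := this.symm
    · rw [Finset.mul_sum]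
      have : ∀ j, s * (c PUnit.unit j * d j) = (s * c PUnit.unit j) * d j := by
        intro j; ring
      rw [Finset.sum_congr rfl fun j _ => this j]
      have hz : ∀ j, s * c PUnit.unit j = 0 := by
        intro j
        have := hc j
        simpa using this
      simp [hz]
  · intro h
    apply Module.Flat.of_forall_isTrivialRelation
    intro ι f x hfx
    choose c hc using fun i => Ideal.mem_span_singleton'.mp (x i).2
    have hs : (∑ i, f i * c i) * a = 0 := by
      have := congrArg (Subtype.val) hfx
      simp only [Submodule.coe_sum, SetLike.val_smul, smul_eq_mul, Submodule.coe_zero] at this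
      rw [Finset.sum_mul]
      rw [← this]
      exact Finset.sum_congr rfl fun i _ => by rw [← hc i]; ring
    obtain ⟨t, hta, hst⟩ := h _ hs
    have hmem : a ∈ Ideal.span {a} := Ideal.mem_span_singleton_self a
    refine ⟨1, fun i _ => c i * t,
      fun _ => ⟨a, hmem⟩, fun i => ?_, fun j => ?_⟩
    · ext
      simp only [Finset.univ_unique, Finset.sum_singleton, SetLike.val_smul, smul_eq_mul]
      rw [← hc i, mul_assoc, hta]
    · simp only [Finset.sum_congr rfl fun i (_ : i ∈ Finset.univ) =>
        show f i * (c i * t) = f i * c i * t by ring, ← Finset.sum_mul, hst]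

theorem retract_isPFRing (R S : Type*) [CommRing R] [CommRing S]
    (φ : R →+* S) (ψ : S →+* R) (hψφ : ψ.comp φ = RingHom.id R)
    (hS : IsPFRing S) : IsPFRing R := by
  intro a
  rw [span_singleton_flat_iff]
  intro s hs
  have hS' := (span_singleton_flat_iff (φ a)).mp (hS (φ a))
  have h0 : φ s * φ a = 0 := by rw [← map_mul, hs, map_zero]
  obtain ⟨T, hTa, hsT⟩ := hS' (φ s) h0
  have hid : ∀ r : R, ψ (φ r) = r := fun r => RingHom.congr_fun hψφ r
  refine ⟨ψ T, ?_, ?_⟩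
  · have := congrArg ψ hTa
    rwa [map_mul, hid] at this
  · have := congrArg ψ hsT
    rwa [map_mul, hid, map_zero] at this
end

section
/- If the amalgamated duplication R ⋈ I is a PF-ring, then R is a PF-ring. -/
/-- The amalgamated duplication `R ⋈ I` as a subring of `R × R`. -/
def Ideal.duplication {R : Type*} [CommRing R] (I : Ideal R) : Subring (R × R) where
  carrier := {p | p.2 - p.1 ∈ I}
  zero_mem' := by simp
  one_mem' := by simp
  add_mem' := by
    intro a b ha hb
    show (a + b).2 - (a + b).1 ∈ I
    convert I.add_mem ha hb using 1
    simp only [Prod.fst_add, Prod.snd_add]; ring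
  neg_mem' := by
    intro a ha
    show (-a).2 - (-a).1 ∈ I
    convert I.neg_mem ha using 1
    simp only [Prod.fst_neg, Prod.snd_neg]; ring
  mul_mem' := by
    intro a b ha hb
    show (a * b).2 - (a * b).1 ∈ I
    have : (a * b).2 - (a * b).1 = a.2 * (b.2 - b.1) + b.1 * (a.2 - a.1) := by
      simp only [Prod.fst_mul, Prod.snd_mul]; ring
    rw [this]
    exact I.add_mem (I.mul_mem_left _ hb) (I.mul_mem_left _ ha)

/-- The diagonal embedding `R →+* R ⋈ I`. -/
def Ideal.duplicationDiag {R : Type*} [CommRing R] (I : Ideal R) : R →+* I.duplication where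
  toFun r := ⟨(r, r), by show r - r ∈ I; simp⟩
  map_one' := rfl
  map_mul' _ _ := rfl
  map_zero' := rfl
  map_add' _ _ := rfl

universe u

/-- Element-wise consequence of flatness of a principal ideal. -/
lemma cond_of_flat_span {A : Type u} [CommRing A] {s x : A}
    (hf : Module.Flat A (Ideal.span {x})) (hsx : s * x = 0) :
    ∃ α : A, α * s = 0 ∧ x = α * x := by
  set M := Ideal.span {x}
  have hxM : x ∈ M := Ideal.mem_span_singleton_self x
  set xe : M := ⟨x, hxM⟩
  have hrel : ∑ _i : PUnit.{u+1}, s • xe = 0 := by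
    simp only [Finset.sum_const, Finset.card_univ]
    ext
    simpa [xe, smul_eq_mul] using hsx
  obtain ⟨κ, a, y, h1, h2⟩ := Module.Flat.isTrivialRelation_of_sum_smul_eq_zero
    (f := fun _ : PUnit.{u+1} => s) (x := fun _ => xe) hrel
  -- each y j lies in span {x}
  have hy : ∀ j : Fin κ, ∃ c : A, (y j : A) = c * x := by
    intro j
    obtain ⟨c, hc⟩ := Ideal.mem_span_singleton'.mp (y j).2
    exact ⟨c, hc.symm⟩
  choose c hc using hy
  refine ⟨∑ j, a PUnit.unit j * c j, ?_, ?_⟩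
  · have : ∀ j, s * a PUnit.unit j = 0 := by
      intro j
      have := h2 j
      simpa using this
    rw [Finset.sum_mul]
    rw [Finset.sum_eq_zero]
    intro j _
    have : s * (a PUnit.unit j) = 0 := this j
    ring_nf
    calc a PUnit.unit j * c j * s = (s * a PUnit.unit j) * c j := by ring
    _ = 0 := by rw [this]; ring
  · have hx1 : (xe : A) = ∑ j, a PUnit.unit j * (c j * x) := by
      have := congrArg (Subtype.val) (h1 PUnit.unit)
      simpa [hc, smul_eq_mul] using this
    calc x = (xe : A) := rfl
    _ = ∑ j, a PUnit.unit j * (c j * x) := hx1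
    _ = (∑ j, a PUnit.unit j * c j) * x := by rw [Finset.sum_mul]; apply Finset.sum_congr rfl; intros; ring

/-- Flatness of a principal ideal from the element-wise condition. -/
lemma flat_span_of_cond {A : Type u} [CommRing A] (a : A)
    (h : ∀ s x : A, s * x = 0 → ∃ α : A, α * s = 0 ∧ x = α * x) :
    Module.Flat A (Ideal.span {a}) := by
  apply Module.Flat.of_forall_isTrivialRelation
  intro ι f m hrel
  have hm : ∀ i : Fin ι, ∃ c : A, (m i : A) = c * a := by
    intro i
    obtain ⟨c, hc⟩ := Ideal.mem_span_singleton'.mp (m i).2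
    exact ⟨c, hc.symm⟩
  choose c hc using hm
  have hsa : (∑ i, f i * c i) * a = 0 := by
    have := congrArg (Subtype.val) hrel
    simpa [Finset.sum_mul, hc, smul_eq_mul, mul_assoc] using this
  obtain ⟨α, hα1, hα2⟩ := h (∑ i, f i * c i) a hsa
  refine ⟨1, fun i _ => c i * α, fun _ => ⟨a, Ideal.mem_span_singleton_self a⟩, ?_, ?_⟩
  · intro i
    ext
    simp only [Finset.sum_const, Finset.card_univ, Fintype.card_fin, one_smul]
    show (m i : A) = _
    rw [hc i]
    simp [smul_eq_mul]
    calc c i * a = c i * (α * a) := by rw [← hα2]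
    _ = c i * α * a := by ring
  · intro _
    have : (∑ i, f i * c i) * α = 0 := by rw [mul_comm]; exact hα1
    calc ∑ i, f i * (c i * α) = (∑ i, f i * c i) * α := by
          rw [Finset.sum_mul]; apply Finset.sum_congr rfl; intros; ring
    _ = 0 := this

theorem duplication_isPFRing_imp_isPFRing (R : Type*) [CommRing R] (I : Ideal R)
    (h : IsPFRing I.duplication) : IsPFRing R := by
  intro a
  apply flat_span_of_cond
  intro s x hsx
  have hd : (I.duplicationDiag s) * (I.duplicationDiag x) = 0 := by
    rw [← map_mul, hsx, map_zero]
  obtain ⟨β, hβ1, hβ2⟩ := cond_of_flat_span (h (I.duplicationDiag x)) hd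
  refine ⟨(β : R × R).1, ?_, ?_⟩
  · have := congrArg (fun z : I.duplication => (z : R × R).1) hβ1
    simpa [Ideal.duplicationDiag] using this
  · have := congrArg (fun z : I.duplication => (z : R × R).1) hβ2
    simpa [Ideal.duplicationDiag] using this
end

section
/- Let R be an integral domain and I a nonzero proper ideal of R. Then the amalgamated duplication R ⋈ I is not a PF-ring. -/
set_option maxHeartbeats 1000000 in
set_option synthInstance.maxHeartbeats 400000 in
theorem duplication_not_isPFRing_of_domain (R : Type*) [CommRing R] [IsDomain R]
    (I : Ideal R) (hbot : I ≠ ⊥) (htop : I ≠ ⊤) : ¬ IsPFRing I.duplication := by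
  intro hPF
  obtain ⟨a, haI, ha⟩ := Submodule.exists_mem_ne_zero_of_ne_bot hbot
  set S := I.duplication with hS
  have hsmem : ((a, 0) : R × R) ∈ S := by
    show (0 : R) - a ∈ I; simpa using I.neg_mem haI
  have hxmem : ((0, a) : R × R) ∈ S := by
    show a - (0 : R) ∈ I; simpa using haI
  set s : S := ⟨(a, 0), hsmem⟩ with hs
  set x : S := ⟨(0, a), hxmem⟩ with hx
  have hsx : s * x = 0 := by
    apply Subtype.ext
    show ((a, 0) : R × R) * (0, a) = 0
    simp [Prod.ext_iff]
  -- use the equational criterion for flatness on the principal ideal span {x}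
  have hflat : Module.Flat S (Ideal.span {x}) := hPF x
  have hcrit := ((Module.Flat.tfae_equational_criterion S (Ideal.span {x})).out 0 3).mp hflat
  set m : Ideal.span {x} := ⟨x, Ideal.mem_span_singleton_self x⟩ with hm
  have hrel : ∑ _i : Fin 1, s • m = 0 := by
    rw [Fintype.sum_unique]
    apply Subtype.ext
    show s • (x : S) = 0
    rw [smul_eq_mul, hsx]
  obtain ⟨κ, A, y, h1, h2⟩ := hcrit (f := fun _ : Fin 1 => s) (x := fun _ => m) hrel
  -- each y j is a multiple of x
  have hy : ∀ j, ∃ b : S, (y j : S) = b * x := by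
    intro j
    obtain ⟨b, hb⟩ := Ideal.mem_span_singleton'.mp (y j).2
    exact ⟨b, hb.symm⟩
  choose b hb using hy
  set α : S := ∑ j, A 0 j * b j with hα
  have hαx : α * x = x := by
    have := congrArg (Subtype.val : Ideal.span {x} → S) (h1 0)
    simp only [Submodule.coe_sum, SetLike.val_smul, smul_eq_mul, hb] at this
    calc α * x = ∑ j, A 0 j * (b j * x) := by
          rw [hα, Finset.sum_mul]; exact Finset.sum_congr rfl fun j _ => by ring
      _ = x := this.symm
  have hαs : α * s = 0 := by
    have h2' : ∀ j, s * A 0 j = 0 := by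
      intro j
      have := h2 j
      rwa [Fintype.sum_unique] at this
    rw [hα, Finset.sum_mul]
    refine Finset.sum_eq_zero fun j _ => ?_
    calc A 0 j * b j * s = b j * (s * A 0 j) := by ring
      _ = 0 := by rw [h2' j, mul_zero]
  -- extract components
  obtain ⟨⟨u, v⟩, huv⟩ := α
  have h1' : u * a = 0 := by
    have := congrArg (fun z : S => (z : R × R).1) hαs
    simpa using this
  have h2' : v * a = a := by
    have := congrArg (fun z : S => (z : R × R).2) hαx
    simpa using this
  have hu : u = 0 := by
    rcases mul_eq_zero.mp h1' with h | h
    · exact h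
    · exact absurd h ha
  have hv : v = 1 := by
    have : (v - 1) * a = 0 := by rw [sub_mul, one_mul, h2', sub_self]
    rcases mul_eq_zero.mp this with h | h
    · exact sub_eq_zero.mp h
    · exact absurd h ha
  have h1I : (1 : R) ∈ I := by
    have : v - u ∈ I := huv
    rwa [hu, hv, sub_zero] at this
  exact htop (Ideal.eq_top_of_isUnit_mem I h1I isUnit_one)
end

section
/- Let R be a PF-ring and e an idempotent element of R. Then the amalgamated duplication R ⋈ Re is a PF-ring. -/
universe u
theorem mem_span_helper {R : Type u} [CommRing R] {a x : R} :
    x ∈ Ideal.span {a} ↔ ∃ c, c * a = x := Ideal.mem_span_singleton'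

def IsPFRingAux (R : Type*) [CommRing R] : Prop :=
  ∀ a : R, Module.Flat R (Ideal.span {a})

theorem isPFRingAux_iff {R : Type u} [CommRing R] :
    IsPFRingAux R ↔ ∀ s x : R, s * x = 0 → ∃ α, α * s = 0 ∧ α * x = x := by
  constructor
  · intro h s x hsx
    have : Module.Flat R (Ideal.span {x}) := h x
    have hx : x ∈ Ideal.span {x} := Ideal.mem_span_singleton_self x
    have hrel : ∑ _i : PUnit.{u+1}, (fun _ : PUnit.{u+1} => s) _i •
        (fun _ : PUnit.{u+1} => (⟨x, hx⟩ : Ideal.span {x})) _i = 0 := by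
      simp only [Fintype.sum_unique]
      ext
      simp [hsx]
    obtain ⟨κ, a, y, h1, h2⟩ := Module.Flat.isTrivialRelation_of_sum_smul_eq_zero hrel
    choose r hr using fun j => Ideal.mem_span_singleton'.mp (y j).2
    refine ⟨∑ j, a PUnit.unit j * r j, ?_, ?_⟩
    · have h2' := h2
      calc (∑ j, a PUnit.unit j * r j) * s = ∑ j, r j * (∑ i : PUnit.{u+1}, s * a i j) := by
            simp only [Fintype.sum_unique]
            rw [Finset.sum_mul]; apply Finset.sum_congr rfl; intros; ring
        _ = 0 := by
            apply Finset.sum_eq_zero; intro j _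
            have := h2 j
            simp only [Fintype.sum_unique] at this
            simp [this]
    · have h1' := congrArg Subtype.val (h1 PUnit.unit)
      simp only [AddSubmonoidClass.coe_finset_sum, SetLike.val_smul, smul_eq_mul] at h1'
      calc (∑ j, a PUnit.unit j * r j) * x = ∑ j, a PUnit.unit j * ((y j : R)) := by
            rw [Finset.sum_mul]; apply Finset.sum_congr rfl; intro j _
            rw [← hr j]; ring
        _ = x := h1'.symm
  · intro h a
    apply Module.Flat.of_forall_isTrivialRelation
    intro ι f m hsum
    choose r hr using fun i => Ideal.mem_span_singleton'.mp (m i).2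
    have hsa : (∑ i, f i * r i) * a = 0 := by
      have := congrArg Subtype.val hsum
      simp only [AddSubmonoidClass.coe_finset_sum, SetLike.val_smul, smul_eq_mul, ZeroMemClass.coe_zero] at this
      rw [Finset.sum_mul]
      rw [← this]
      apply Finset.sum_congr rfl; intro i _
      rw [← hr i]; ring
    obtain ⟨α, hα1, hα2⟩ := h _ a hsa
    refine ⟨1, fun i _ => r i * α,
      fun _ => ⟨a, Ideal.mem_span_singleton_self a⟩, ?_, ?_⟩
    · intro i
      ext
      simp only [Fintype.sum_unique, SetLike.val_smul, smul_eq_mul]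
      rw [← hr i, mul_assoc, hα2]
    · intro j
      calc ∑ i, f i * (r i * α) = (∑ i, f i * r i) * α := by
            rw [Finset.sum_mul]; apply Finset.sum_congr rfl; intros; ring
        _ = 0 := by rw [mul_comm, hα1]

theorem mem_duplication_iff' {R : Type*} [CommRing R] {I : Ideal R} {p : R × R} :
    p ∈ Ideal.duplication I ↔ p.2 - p.1 ∈ I := Iff.rfl

theorem duplication_idempotent_isPFRing (R : Type*) [CommRing R] (hR : IsPFRing R)
    (e : R) (he : IsIdempotentElem e) : IsPFRing (Ideal.span {e}).duplication := by
  have hR' : IsPFRingAux R := hR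
  rw [show (IsPFRing (Ideal.span {e}).duplication) =
      (IsPFRingAux (Ideal.span {e}).duplication) from rfl, isPFRingAux_iff]
  rw [isPFRingAux_iff] at hR'
  intro s x hsx
  -- key fact: for p in the duplication, (1-e) * p.2 = (1-e) * p.1
  have key : ∀ p : ((Ideal.span {e}).duplication : Subring (R × R)),
      (1 - e) * (p : R × R).2 = (1 - e) * (p : R × R).1 := by
    intro p
    obtain ⟨c, hc⟩ := Ideal.mem_span_singleton'.mp (mem_duplication_iff'.mp p.2)
    have hee : e * e = e := he
    linear_combination -(1 - e) * hc - c * hee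
  have hv := congrArg Subtype.val hsx
  have h1 : (s : R × R).1 * (x : R × R).1 = 0 := congrArg Prod.fst hv
  have h2 : (s : R × R).2 * (x : R × R).2 = 0 := congrArg Prod.snd hv
  obtain ⟨a, ha1, ha2⟩ := hR' _ _ h1
  obtain ⟨g, hg1, hg2⟩ := hR' _ _ h2
  have hks := key s
  have hkx := key x
  refine ⟨⟨(a, e * g + (1 - e) * a), ?_⟩, ?_, ?_⟩
  · exact mem_duplication_iff'.mpr (Ideal.mem_span_singleton'.mpr ⟨g - a, by ring⟩)
  · ext : 1
    apply Prod.ext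
    · simpa using ha1
    · show (e * g + (1 - e) * a) * (s : R × R).2 = 0
      linear_combination e * hg1 + a * hks + (1 - e) * ha1
  · ext : 1
    apply Prod.ext
    · simpa using ha2
    · show (e * g + (1 - e) * a) * (x : R × R).2 = (x : R × R).2
      linear_combination e * hg2 + a * hkx + (1 - e) * ha2 - hkx
end

section
/- If every ideal of a commutative ring R is P-flat and R is arithmetical, then every finitely generated ideal of R is flat (equivalently, R has weak global dimension at most 1). -/
open TensorProduct
set_option maxHeartbeats 1000000
set_option synthInstance.maxHeartbeats 400000

/-- A commutative ring is arithmetical if its lattice of ideals is distributive. -/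
def IsArithmetical (R : Type*) [CommRing R] : Prop :=
  ∀ a b c : Ideal R, a ⊓ (b ⊔ c) = (a ⊓ b) ⊔ (a ⊓ c)

section Aux

variable {R : Type*} [CommRing R]

lemma pflat_elem (hP : ∀ I : Ideal R, IsPFlat R I) {s x : R} (h : s * x = 0) :
    ∃ e : R, e * s = 0 ∧ x = e * x := by
  have hx : x ∈ Ideal.span {x} := Ideal.subset_span rfl
  have h0 : s • (⟨x, hx⟩ : Ideal.span {x}) = 0 := by
    ext
    simpa [smul_eq_mul, mul_comm] using h
  have hmem := hP (Ideal.span {x}) s ⟨x, hx⟩ h0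
  have hmap : x ∈ (Ideal.span {s}).annihilator • (Ideal.span {x}) := by
    have := Submodule.mem_map_of_mem (f := (Ideal.span {x}).subtype) hmem
    rwa [Submodule.map_smul'', Submodule.map_subtype_top] at this
  rw [Ideal.smul_eq_mul, Ideal.mem_mul_span_singleton] at hmap
  obtain ⟨e, he, hex⟩ := hmap
  refine ⟨e, ?_, ?_⟩
  · have := Submodule.mem_annihilator.mp he s (Ideal.subset_span rfl)
    simpa [smul_eq_mul] using this
  · exact hex.symm

lemma jensen (hA : IsArithmetical R) (a b : R) :
    ∃ r s t : R, r * a = s * b ∧ (1 - r) * b = t * a := by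
  have hb : b ∈ Ideal.span {b} ⊓ (Ideal.span {a} ⊔ Ideal.span {a + b}) := by
    refine ⟨Ideal.subset_span rfl, ?_⟩
    have h1 : a + b ∈ Ideal.span {a} ⊔ Ideal.span {a + b} :=
      Submodule.mem_sup_right (Ideal.subset_span rfl)
    have h2 : a ∈ Ideal.span {a} ⊔ Ideal.span {a + b} :=
      Submodule.mem_sup_left (Ideal.subset_span rfl)
    simpa using sub_mem h1 h2
  rw [hA] at hb
  obtain ⟨u, hu, v, hv, huv⟩ := Submodule.mem_sup.mp hb
  obtain ⟨t', ht⟩ := Ideal.mem_span_singleton'.mp hu.2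
  obtain ⟨w, hw⟩ := Ideal.mem_span_singleton'.mp hv.1
  obtain ⟨r, hr⟩ := Ideal.mem_span_singleton'.mp hv.2
  exact ⟨r, w - r, t' + r, by linear_combination hr - hw, by linear_combination - huv - hr - ht⟩

lemma loc_isDomain (hP : ∀ s x : R, s * x = 0 → ∃ e : R, e * s = 0 ∧ x = e * x)
    (P : Ideal R) [P.IsMaximal] : IsDomain (Localization.AtPrime P) := by
  set A := Localization.AtPrime P
  haveI : NoZeroDivisors A := by
    constructor
    intro z w hzw
    obtain ⟨a, s, rfl⟩ := IsLocalization.exists_mk'_eq P.primeCompl z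
    obtain ⟨b, t, rfl⟩ := IsLocalization.exists_mk'_eq P.primeCompl w
    rw [← IsLocalization.mk'_mul, IsLocalization.mk'_eq_zero_iff] at hzw
    obtain ⟨m, hm⟩ := hzw
    obtain ⟨e, he1, he2⟩ := hP (↑m * a) b (by rw [← mul_assoc] at hm; exact hm)
    rcases IsLocalRing.isUnit_or_isUnit_one_sub_self (algebraMap R A e) with hu | hu
    · left
      rw [IsLocalization.mk'_eq_zero_iff]
      have hme : (e * ↑m) ∈ P.primeCompl :=
        mul_mem ((IsLocalization.AtPrime.isUnit_to_map_iff A P e).mp hu) m.2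
      exact ⟨⟨e * ↑m, hme⟩, by rw [show (e * ↑m) * a = e * (↑m * a) by ring]; exact he1⟩
    · right
      rw [IsLocalization.mk'_eq_zero_iff]
      have h1e : (1 - e) ∈ P.primeCompl := by
        refine (IsLocalization.AtPrime.isUnit_to_map_iff A P (1 - e)).mp ?_
        rwa [map_sub, map_one]
      exact ⟨⟨1 - e, h1e⟩, by rw [sub_mul, one_mul, ← he2, sub_self]⟩
  exact NoZeroDivisors.to_isDomain _

lemma algMap_dvd_mk'_dvd (P : Ideal R) [P.IsMaximal] {a b : R} (s t : P.primeCompl)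
    (h : algebraMap R (Localization.AtPrime P) a ∣ algebraMap R (Localization.AtPrime P) b) :
    IsLocalization.mk' (Localization.AtPrime P) a s ∣ IsLocalization.mk' (Localization.AtPrime P) b t := by
  obtain ⟨c, hc⟩ := h
  refine ⟨algebraMap R _ ↑s * c * IsLocalization.mk' _ (1:R) t, ?_⟩
  rw [IsLocalization.mk'_eq_mul_mk'_one b t, hc]
  rw [show IsLocalization.mk' (Localization.AtPrime P) a s *
      (algebraMap R _ ↑s * c * IsLocalization.mk' _ (1:R) t) =
      (IsLocalization.mk' (Localization.AtPrime P) a s * algebraMap R _ ↑s) *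
      c * IsLocalization.mk' _ (1:R) t by ring, IsLocalization.mk'_spec]

lemma loc_dvd_total (hA : IsArithmetical R) (P : Ideal R) [P.IsMaximal] :
    IsTotal (Localization.AtPrime P) (· ∣ ·) := by
  set A := Localization.AtPrime P
  constructor
  intro z w
  obtain ⟨a, s, rfl⟩ := IsLocalization.exists_mk'_eq P.primeCompl z
  obtain ⟨b, t, rfl⟩ := IsLocalization.exists_mk'_eq P.primeCompl w
  obtain ⟨r, s', t', h1, h2⟩ := jensen hA a b
  rcases IsLocalRing.isUnit_or_isUnit_one_sub_self (algebraMap R A r) with hu | hu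
  · -- r a = s' b, r unit: b divides a
    right
    refine algMap_dvd_mk'_dvd P t s ?_
    have : algebraMap R A b ∣ algebraMap R A r * algebraMap R A a := by
      refine ⟨algebraMap R A s', ?_⟩
      rw [← map_mul, h1, map_mul, mul_comm]
    rwa [IsUnit.dvd_mul_left hu] at this
  · left
    refine algMap_dvd_mk'_dvd P s t ?_
    have hu' : IsUnit (algebraMap R A (1 - r)) := by rwa [map_sub, map_one]
    have : algebraMap R A a ∣ algebraMap R A (1 - r) * algebraMap R A b := by
      refine ⟨algebraMap R A t', ?_⟩
      rw [← map_mul, h2, map_mul, mul_comm]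
    rwa [IsUnit.dvd_mul_left hu'] at this


end Aux

section Aux2

lemma flat_of_fg_ideal {A : Type*} [CommRing A] [IsDomain A] [IsBezout A]
    (K : Ideal A) (hK : K.FG) : Module.Flat A K := by
  obtain ⟨x, hx⟩ := (IsBezout.isPrincipal_of_FG K hK).principal
  subst hx
  rcases eq_or_ne x 0 with h0 | h0
  · rw [h0, Submodule.span_zero_singleton]
    infer_instance
  · exact Module.Flat.of_linearEquiv (LinearEquiv.toSpanNonzeroSingleton A A x h0).symm


end Aux2

theorem fg_ideal_flat_of_pflat_arithmetical (R : Type*) [CommRing R]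
    (hP : ∀ I : Ideal R, IsPFlat R I) (hA : IsArithmetical R) :
    ∀ I : Ideal R, I.FG → Module.Flat R I := by
  intro I hI
  have hPe : ∀ s x : R, s * x = 0 → ∃ e : R, e * s = 0 ∧ x = e * x :=
    fun s x h => pflat_elem hP h
  rw [Module.Flat.iff_rTensor_injective]
  intro J hJ
  set F' : (↥J ⊗[R] ↥I) →ₗ[R] ↥I :=
    (TensorProduct.lid R ↥I).toLinearMap ∘ₗ LinearMap.rTensor (↥I) J.subtype with hF'def
  suffices hinj : Function.Injective F' by
    have : Function.Injective
        (⇑(TensorProduct.lid R ↥I).toLinearMap ∘ ⇑(LinearMap.rTensor (↥I) J.subtype)) := by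
      rw [← LinearMap.coe_comp]; exact hinj
    exact this.of_comp
  rw [injective_iff_map_eq_zero]
  intro z hz
  have key : ∀ (P : Ideal R), P.IsMaximal → ∃ c : R, c ∉ P ∧ c • z = 0 := by
    intro P hPmax
    haveI := hPmax
    set A := Localization.AtPrime P with hAdef
    haveI : IsDomain A := loc_isDomain hPe P
    haveI : ValuationRing A := ValuationRing.iff_dvd_total.mpr (loc_dvd_total hA P)
    set φJ : (A ⊗[R] ↥J) →ₗ[A] A :=
      (TensorProduct.AlgebraTensorModule.rid R A A).toLinearMap ∘ₗ
        LinearMap.baseChange A J.subtype with hφJdef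
    set φI : (A ⊗[R] ↥I) →ₗ[A] A :=
      (TensorProduct.AlgebraTensorModule.rid R A A).toLinearMap ∘ₗ
        LinearMap.baseChange A I.subtype with hφIdef
    have hφJ : Function.Injective φJ := by
      simp only [hφJdef, LinearMap.coe_comp, LinearEquiv.coe_coe]
      refine (LinearEquiv.injective _).comp ?_
      rw [LinearMap.baseChange_eq_ltensor]
      exact Module.Flat.lTensor_preserves_injective_linearMap _ J.injective_subtype
    have hφI : Function.Injective φI := by
      simp only [hφIdef, LinearMap.coe_comp, LinearEquiv.coe_coe]
      refine (LinearEquiv.injective _).comp ?_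
      rw [LinearMap.baseChange_eq_ltensor]
      exact Module.Flat.lTensor_preserves_injective_linearMap _ I.injective_subtype
    haveI : Module.Finite R ↥I := Module.Finite.iff_fg.mpr hI
    have hKfg : (LinearMap.range φI).FG := by
      rw [LinearMap.range_eq_map]
      exact Submodule.FG.map _ (Module.finite_def.mp inferInstance)
    haveI hKflat : Module.Flat A ↥(LinearMap.range φI) := flat_of_fg_ideal _ hKfg
    haveI : Module.Flat A (A ⊗[R] ↥I) :=
      Module.Flat.of_linearEquiv (LinearEquiv.ofInjective φI hφI)
    set G : ((A ⊗[R] ↥J) ⊗[A] (A ⊗[R] ↥I)) →ₗ[A] (A ⊗[R] ↥I) :=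
      (TensorProduct.lid A (A ⊗[R] ↥I)).toLinearMap ∘ₗ
        LinearMap.rTensor (A ⊗[R] ↥I) φJ with hGdef
    have hG : Function.Injective G := by
      simp only [hGdef, LinearMap.coe_comp, LinearEquiv.coe_coe]
      exact (LinearEquiv.injective _).comp
        (Module.Flat.rTensor_preserves_injective_linearMap φJ hφJ)
    set E : ((A ⊗[R] ↥J) ⊗[A] (A ⊗[R] ↥I)) ≃ₗ[A] (A ⊗[R] (↥J ⊗[R] ↥I)) :=
      (TensorProduct.AlgebraTensorModule.cancelBaseChange R A A (A ⊗[R] ↥J) ↥I) ≪≫ₗ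
        (TensorProduct.AlgebraTensorModule.assoc R R A A ↥J ↥I) with hEdef
    set mkJI := TensorProduct.mk R A (↥J ⊗[R] ↥I) 1 with hmkdef
    haveI hloc1 : IsLocalizedModule P.primeCompl mkJI :=
      (isLocalizedModule_iff_isBaseChange P.primeCompl A _).mpr
        (TensorProduct.isBaseChange _ _ _)
    set fP : (↥J ⊗[R] ↥I) →ₗ[R] ((A ⊗[R] ↥J) ⊗[A] (A ⊗[R] ↥I)) :=
      (E.symm.restrictScalars R : _ ≃ₗ[R] _) ∘ₗ mkJI with hfPdef
    haveI hloc2 : IsLocalizedModule P.primeCompl fP :=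
      IsLocalizedModule.of_linearEquiv P.primeCompl mkJI (E.symm.restrictScalars R)
    have comm : (G.restrictScalars R) ∘ₗ fP = (TensorProduct.mk R A ↥I 1) ∘ₗ F' := by
      apply TensorProduct.ext'
      intro j x
      have h1 : fP (j ⊗ₜ x) = ((1:A) ⊗ₜ[R] j) ⊗ₜ[A] ((1:A) ⊗ₜ[R] x) := by
        simp only [hfPdef, hEdef, LinearMap.coe_comp, Function.comp_apply,
          LinearEquiv.coe_coe, LinearEquiv.restrictScalars_apply, LinearEquiv.trans_symm,
          LinearEquiv.trans_apply]
        rw [TensorProduct.mk_apply]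
        rw [TensorProduct.AlgebraTensorModule.assoc_symm_tmul,
          TensorProduct.AlgebraTensorModule.cancelBaseChange_symm_tmul]
      simp only [LinearMap.coe_comp, Function.comp_apply, LinearMap.coe_restrictScalars]
      rw [h1]
      simp only [hGdef, hF'def, LinearMap.coe_comp, Function.comp_apply, LinearEquiv.coe_coe,
        LinearMap.rTensor_tmul, TensorProduct.lid_tmul, hφJdef,
        LinearMap.baseChange_tmul, Submodule.coe_subtype,
        TensorProduct.AlgebraTensorModule.rid_tmul, TensorProduct.mk_apply]
      rw [TensorProduct.tmul_smul, smul_assoc, one_smul]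
    have hz0 : fP z = 0 := by
      have h1 := LinearMap.congr_fun comm z
      simp only [LinearMap.coe_comp, Function.comp_apply, LinearMap.coe_restrictScalars] at h1
      rw [hz, map_zero] at h1
      exact hG (by simpa using h1)
    obtain ⟨c, hc⟩ := IsLocalizedModule.exists_of_eq (S := P.primeCompl) (f := fP)
      (show fP z = fP 0 by rw [hz0, map_zero])
    exact ⟨(c : R), c.2, by simpa [Submonoid.smul_def] using hc⟩
  have htop : Ideal.torsionOf R (↥J ⊗[R] ↥I) z = ⊤ := by
    by_contra hne
    obtain ⟨P, hPmax, hle⟩ := Ideal.exists_le_maximal _ hne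
    obtain ⟨c, hcP, hc⟩ := key P hPmax
    exact hcP (hle ((Ideal.mem_torsionOf_iff z c).mpr hc))
  have h1 : (1:R) ∈ Ideal.torsionOf R (↥J ⊗[R] ↥I) z := htop ▸ Submodule.mem_top
  simpa using (Ideal.mem_torsionOf_iff z (1:R)).mp h1
end
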